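/- If a solution satisfies the discrepancy-based residual bound ‖F(x_n^δ) − y^δ‖ > τδ for 0 ≤ n < n_δ with τ > (1+η)/(1−η), and the per-step estimate D_{ξ_n^δ}Θ(x̂, x_n^δ) − D_{ξ_{n−1}^δ}Θ(x̂, x_{n−1}^δ) ≤ −(1/α_n)(1 − η − (1+η)/τ)‖F(x_n^δ) − y^δ‖^r holds for 1 ≤ n < n_δ, then summing gives ‖F(x_n^δ) − y^δ‖^r ∑_{j=1}^n α_j^{−1} ≤ C₁ D_{ξ_0}Θ(x̂, x_0) with C₁ = τ/((1−η)τ − 1 − η), using monotonicity of the residuals. Consequently, if ∑_{j=1}^∞ α_j^{−1} = ∞, the stopping index n_δ is finite. -/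

import Mathlib

/-- Summing the per-step estimates gives the residual bound, and divergence of ∑ 1/αⱼ
forces the discrepancy principle to stop after finitely many steps. -/
theorem discrepancy_stops (τ δ η r : ℝ) (hη0 : 0 ≤ η) (hη1 : η < 1)
    (hτ : (1 + η) / (1 - η) < τ) (hδ : 0 < δ) (hr : 1 < r)
    (R D α : ℕ → ℝ) (hα : ∀ n, 0 < α n)
    (hRmono : ∀ n, R (n + 1) ≤ R n) (hDnonneg : ∀ n, 0 ≤ D n)
    (hstep : ∀ n, 1 ≤ n → (∀ j ≤ n, τ * δ < R j) →
      D n - D (n - 1) ≤ -(1 / α n) * (1 - η - (1 + η) / τ) * R n ^ r)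
    (hdiv : Filter.Tendsto (fun n => ∑ j ∈ Finset.Icc 1 n, (α j)⁻¹)
      Filter.atTop Filter.atTop) :
    (∀ n, (∀ j ≤ n, τ * δ < R j) →
      R n ^ r * ∑ j ∈ Finset.Icc 1 n, (α j)⁻¹ ≤ (τ / ((1 - η) * τ - 1 - η)) * D 0) ∧
    (∃ n, R n ≤ τ * δ) := by
  have h1η : 0 < 1 - η := by linarith
  have hτpos : 0 < τ := lt_trans (div_pos (by linarith) h1η) hτ
  have h1 : 1 + η < (1 - η) * τ := by
    have := (div_lt_iff₀ h1η).mp hτ; linarith [mul_comm τ (1 - η)] 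
  have hc : 0 < 1 - η - (1 + η) / τ := by
    have h2 : (1 + η) / τ < 1 - η := (div_lt_iff₀ hτpos).mpr (by linarith)
    linarith
  set c : ℝ := 1 - η - (1 + η) / τ with hcdef
  have hτδ : 0 < τ * δ := mul_pos hτpos hδ
  have hanti : Antitone R := antitone_nat_of_succ_le hRmono
  have key : ∀ n, (∀ j ≤ n, τ * δ < R j) →
      D n + c * ∑ j ∈ Finset.Icc 1 n, (α j)⁻¹ * R j ^ r ≤ D 0 := by
    intro n
    induction n with
    | zero => intro _; simp
    | succ n ih =>
      intro H
      have ihn := ih (fun j hj => H j (le_trans hj (Nat.le_succ n)))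
      have hs := hstep (n + 1) (by omega) H
      simp only [Nat.add_sub_cancel] at hs
      rw [Finset.sum_Icc_succ_top (by omega : 1 ≤ n + 1)]
      have e : -(1 / α (n + 1)) * c * R (n + 1) ^ r
          = -(c * ((α (n + 1))⁻¹ * R (n + 1) ^ r)) := by ring
      rw [e] at hs
      linarith
  have part1 : ∀ n, (∀ j ≤ n, τ * δ < R j) →
      R n ^ r * ∑ j ∈ Finset.Icc 1 n, (α j)⁻¹ ≤ (τ / ((1 - η) * τ - 1 - η)) * D 0 := by
    intro n H
    have hkey := key n H
    have hRn : 0 < R n := lt_trans hτδ (H n le_rfl)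
    have hterm : ∀ j ∈ Finset.Icc 1 n, R n ^ r * (α j)⁻¹ ≤ (α j)⁻¹ * R j ^ r := by
      intro j hj
      have hjn : j ≤ n := (Finset.mem_Icc.mp hj).2
      have hRr : R n ^ r ≤ R j ^ r :=
        Real.rpow_le_rpow (le_of_lt hRn) (hanti hjn) (by linarith)
      have hαj := (hα j)
      calc R n ^ r * (α j)⁻¹ = (α j)⁻¹ * R n ^ r := by ring
        _ ≤ (α j)⁻¹ * R j ^ r := by
            exact mul_le_mul_of_nonneg_left hRr (le_of_lt (inv_pos.mpr hαj))
    have hsum : R n ^ r * ∑ j ∈ Finset.Icc 1 n, (α j)⁻¹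
        ≤ ∑ j ∈ Finset.Icc 1 n, (α j)⁻¹ * R j ^ r := by
      rw [Finset.mul_sum]
      exact Finset.sum_le_sum hterm
    have hD0 : c * ∑ j ∈ Finset.Icc 1 n, (α j)⁻¹ * R j ^ r ≤ D 0 := by
      have := hDnonneg n; linarith
    have hprod : c * (R n ^ r * ∑ j ∈ Finset.Icc 1 n, (α j)⁻¹) ≤ D 0 := by
      nlinarith [mul_le_mul_of_nonneg_left hsum hc.le]
    have hdpos : 0 < (1 - η) * τ - 1 - η := by linarith
    have hCpos : 0 < τ / ((1 - η) * τ - 1 - η) := div_pos hτpos hdpos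
    have hCc : (τ / ((1 - η) * τ - 1 - η)) * c = 1 := by
      rw [hcdef]
      rw [div_mul_eq_mul_div, div_eq_one_iff_eq hdpos.ne']
      have h' : τ * ((1 + η) / τ) = 1 + η := by field_simp
      rw [mul_sub, h']; ring
    calc R n ^ r * ∑ j ∈ Finset.Icc 1 n, (α j)⁻¹
        = (τ / ((1 - η) * τ - 1 - η)) * (c * (R n ^ r * ∑ j ∈ Finset.Icc 1 n, (α j)⁻¹)) := by
          rw [← mul_assoc, hCc, one_mul]
      _ ≤ (τ / ((1 - η) * τ - 1 - η)) * D 0 := mul_le_mul_of_nonneg_left hprod hCpos.le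
  refine ⟨part1, ?_⟩
  by_contra hcon
  push_neg at hcon
  have hall : ∀ n, ∀ j ≤ n, τ * δ < R j := fun n j _ => hcon j
  set C : ℝ := τ / ((1 - η) * τ - 1 - η)
  have hτδr : 0 < (τ * δ) ^ r := Real.rpow_pos_of_pos hτδ r
  obtain ⟨n, hn⟩ := (hdiv.eventually (Filter.eventually_gt_atTop
    (C * D 0 / (τ * δ) ^ r))).exists
  have hb := part1 n (hall n)
  have hSpos : 0 < ∑ j ∈ Finset.Icc 1 n, (α j)⁻¹ := by
    have : C * D 0 / (τ * δ) ^ r < ∑ j ∈ Finset.Icc 1 n, (α j)⁻¹ := hn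
    by_contra hS
    push_neg at hS
    have hfin : (0:ℝ) ≤ ∑ j ∈ Finset.Icc 1 n, (α j)⁻¹ :=
      Finset.sum_nonneg fun j _ => le_of_lt (inv_pos.mpr (hα j))
    have hS0 : ∑ j ∈ Finset.Icc 1 n, (α j)⁻¹ = 0 := le_antisymm hS hfin
    rw [hS0] at this
    have hCD : 0 ≤ C * D 0 := by
      have hCpos : 0 < C := div_pos hτpos (by linarith)
      exact mul_nonneg (le_of_lt hCpos) (hDnonneg 0)
    have : C * D 0 / (τ * δ) ^ r < 0 := this
    have : ¬ (C * D 0 / (τ * δ) ^ r < 0) :=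
      not_lt.mpr (div_nonneg hCD (le_of_lt hτδr))
    exact this (by linarith)
  have hRr : (τ * δ) ^ r ≤ R n ^ r :=
    Real.rpow_le_rpow (le_of_lt hτδ) (le_of_lt (hcon n)) (by linarith)
  have h3 : (τ * δ) ^ r * ∑ j ∈ Finset.Icc 1 n, (α j)⁻¹ ≤ C * D 0 := by
    calc (τ * δ) ^ r * ∑ j ∈ Finset.Icc 1 n, (α j)⁻¹
        ≤ R n ^ r * ∑ j ∈ Finset.Icc 1 n, (α j)⁻¹ :=
          mul_le_mul_of_nonneg_right hRr (le_of_lt hSpos)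
      _ ≤ C * D 0 := hb
  have h4 : C * D 0 / (τ * δ) ^ r < ∑ j ∈ Finset.Icc 1 n, (α j)⁻¹ := hn
  rw [div_lt_iff₀ hτδr] at h4
  nlinarith
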